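/- Let d be a positive squarefree integer with d ≡ 3 (mod 4). Then the family over primes p ↦ (1 − 1/p + 1/(p + χ(p))) is multipliable, each factor is positive, and the value C = ∏_{p prime} (1 − 1/p + 1/(p + χ(p))) of the infinite product is strictly positive. -/

import Mathlib

/-- The quadratic character attached to `ℚ(√-d)`, defined on primes:
`χ(2) = (-1)^((d²-1)/8)` and `χ(p) = (-d/p)` (Legendre symbol) for odd primes `p`;
`0` off the primes. -/
noncomputable def chi (d : ℕ) (p : ℕ) : ℤ :=
  if hp : p.Prime then
    if p = 2 then (-1) ^ ((d ^ 2 - 1) / 8)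
    else @legendreSym p ⟨hp⟩ (-(d : ℤ))
  else 0

lemma chi_abs_le (d p : ℕ) : |chi d p| ≤ 1 := by
  unfold chi
  split_ifs with hp h2
  · rw [abs_pow, abs_neg, abs_one, one_pow]
  · haveI : Fact p.Prime := ⟨hp⟩
    by_cases h : ((-(d : ℤ) : ℤ) : ZMod p) = 0
    · rw [(legendreSym.eq_zero_iff p _).mpr h]; norm_num
    · have hsq := legendreSym.sq_one (p := p) h
      set x := legendreSym p (-(d : ℤ))
      rw [abs_le]
      constructor <;> nlinarith [sq_nonneg (x + 1), sq_nonneg (x - 1)]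
  · norm_num

lemma log_abs_le {x : ℝ} (hx : 1/2 ≤ x) : |Real.log x| ≤ 2 * |x - 1| := by
  have hx0 : 0 < x := by linarith
  rcases le_total 1 x with h | h
  · rw [abs_of_nonneg (Real.log_nonneg h), abs_of_nonneg (by linarith)]
    have := Real.log_le_sub_one_of_pos hx0
    linarith
  · rw [abs_of_nonpos (Real.log_nonpos (le_of_lt hx0) h), abs_of_nonpos (by linarith)]
    have h2 : Real.log x⁻¹ ≤ x⁻¹ - 1 := Real.log_le_sub_one_of_pos (by positivity)
    rw [Real.log_inv] at h2
    have h3 : x⁻¹ - 1 ≤ 2 * (1 - x) := by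
      have hxx : x * x⁻¹ = 1 := mul_inv_cancel₀ (ne_of_gt hx0)
      nlinarith [hxx]
    linarith

/-- The family `p ↦ 1 - 1/p + 1/(p + χ(p))` over the primes is multipliable, each factor
is positive, and the value `C` of the infinite product is strictly positive. -/
theorem Cconst_positive (d : ℕ) (hd : 0 < d) (hsq : Squarefree d) (hmod : d % 4 = 3) :
    Multipliable (fun p : Nat.Primes =>
      (1 - 1 / (p.1 : ℝ) + 1 / ((p.1 : ℝ) + (chi d p.1 : ℝ)))) ∧
    (∀ p : Nat.Primes, 0 < 1 - 1 / (p.1 : ℝ) + 1 / ((p.1 : ℝ) + (chi d p.1 : ℝ))) ∧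
    0 < ∏' p : Nat.Primes, (1 - 1 / (p.1 : ℝ) + 1 / ((p.1 : ℝ) + (chi d p.1 : ℝ))) := by
  set f : Nat.Primes → ℝ := fun p => 1 - 1 / (p.1 : ℝ) + 1 / ((p.1 : ℝ) + (chi d p.1 : ℝ))
    with hf
  have hc : ∀ p : Nat.Primes, |((chi d p.1 : ℤ) : ℝ)| ≤ 1 := by
    intro p
    have := chi_abs_le d p.1
    exact_mod_cast this
  have hp2 : ∀ p : Nat.Primes, (2 : ℝ) ≤ (p.1 : ℝ) := by
    intro p; exact_mod_cast p.2.two_le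
  have hpc : ∀ p : Nat.Primes, (p.1 : ℝ) / 2 ≤ (p.1 : ℝ) + (chi d p.1 : ℝ) := by
    intro p
    have h1 := hp2 p
    have h2 := (abs_le.mp (hc p)).1
    linarith
  have hpc0 : ∀ p : Nat.Primes, (0 : ℝ) < (p.1 : ℝ) + (chi d p.1 : ℝ) := by
    intro p; have := hpc p; have := hp2 p; linarith
  -- each factor at least 1/2
  have hpos : ∀ p : Nat.Primes, 1/2 ≤ f p := by
    intro p
    have h1 := hp2 p
    have h2 : 1 / (p.1 : ℝ) ≤ 1 / 2 := by
      apply one_div_le_one_div_of_le <;> linarith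
    have h3 : 0 < 1 / ((p.1 : ℝ) + (chi d p.1 : ℝ)) := one_div_pos.mpr (hpc0 p)
    simp only [hf]; linarith
  have hpos' : ∀ p : Nat.Primes, 0 < f p := fun p => lt_of_lt_of_le (by norm_num) (hpos p)
  -- |f p - 1| ≤ 2 / p ^ 2
  have hdist : ∀ p : Nat.Primes, |f p - 1| ≤ 2 / (p.1 : ℝ) ^ 2 := by
    intro p
    have h1 := hp2 p
    have h0 : (0 : ℝ) < (p.1 : ℝ) := by linarith
    have h2 := hpc0 p
    have h3 := hpc p
    set c := ((chi d p.1 : ℤ) : ℝ)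
    have hdiff : f p - 1 = -c / (((p.1 : ℝ) + c) * (p.1 : ℝ)) := by
      simp only [hf]; change 1 - 1 / (p.1:ℝ) + 1 / ((p.1:ℝ) + c) - 1 = _; have h2' := h2.ne'; field_simp; ring
    rw [hdiff, abs_div, abs_neg, abs_of_pos (mul_pos h2 h0)]
    calc |c| / (((p.1 : ℝ) + c) * (p.1 : ℝ)) ≤ 1 / (((p.1 : ℝ) / 2) * (p.1 : ℝ)) := by
          apply div_le_div₀ (by norm_num) (hc p) (by positivity)
          apply mul_le_mul_of_nonneg_right h3 (le_of_lt h0)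
      _ = 2 / (p.1 : ℝ) ^ 2 := by field_simp
  -- summability of the logs
  have hmaj : Summable (fun p : Nat.Primes => 4 / (p.1 : ℝ) ^ 2) := by
    have h : Summable (fun n : ℕ => 4 / (n : ℝ) ^ 2) := by
      have := (Real.summable_one_div_nat_pow (p := 2)).mpr one_lt_two
      simpa [div_eq_mul_inv] using this.mul_left 4
    exact h.comp_injective Subtype.coe_injective
  have hlogabs : Summable (fun p : Nat.Primes => |Real.log (f p)|) := by
    apply Summable.of_nonneg_of_le (fun p => abs_nonneg _) _ hmaj
    intro p
    calc |Real.log (f p)| ≤ 2 * |f p - 1| := log_abs_le (hpos p)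
      _ ≤ 2 * (2 / (p.1 : ℝ) ^ 2) := by linarith [hdist p]
      _ = 4 / (p.1 : ℝ) ^ 2 := by ring
  have hlog : Summable (fun p : Nat.Primes => Real.log (f p)) := hlogabs.of_abs
  have hprod : HasProd f (Real.exp (∑' p : Nat.Primes, Real.log (f p))) := by
    have := hlog.hasSum.rexp
    have heq : (Real.exp ∘ fun p : Nat.Primes => Real.log (f p)) = f :=
      funext fun p => Real.exp_log (hpos' p)
    rwa [heq] at this
  refine ⟨⟨_, hprod⟩, hpos', ?_⟩
  rw [hprod.tprod_eq]
  exact Real.exp_pos _
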